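/- Let M ∈ ℝ^{n×m} have rank r with singular value decomposition M = U*Σ*(V*)ᵀ, and suppose ‖(I − V*(V*)ᵀ)V‖₂ ≤ η for some V ∈ ℝ^{m×r} with orthonormal columns. Then for the matrix Û minimizing ‖M − ÛVᵀ‖_F over Û ∈ ℝ^{n×r} (namely Û = MV), one has ‖M − ÛVᵀ‖_F = ‖M(I − VVᵀ)‖_F ≤ ‖M‖_F · ‖(I − VVᵀ)(V*)‖₂ ≤ √2·η·‖M‖_F when η ≤ 1. -/

import Mathlib

open Matrix

/-- Spectral (operator) norm of a real matrix. -/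
noncomputable def sNorm {n r : ℕ} (A : Matrix (Fin n) (Fin r) ℝ) : ℝ :=
  ‖(LinearMap.toContinuousLinearMap (Matrix.toEuclideanLin A))‖

/-- Frobenius norm of a real matrix. -/
noncomputable def frob {n m : ℕ} (A : Matrix (Fin n) (Fin m) ℝ) : ℝ :=
  Real.sqrt (∑ i, ∑ j, (A i j) ^ 2)

lemma sNorm_nonneg {a b : ℕ} (A : Matrix (Fin a) (Fin b) ℝ) : 0 ≤ sNorm A := norm_nonneg _

lemma el_apply_le {a b : ℕ} (A : Matrix (Fin a) (Fin b) ℝ) (x : EuclideanSpace ℝ (Fin b)) :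
    ‖Matrix.toEuclideanLin A x‖ ≤ sNorm A * ‖x‖ := by
  have := (LinearMap.toContinuousLinearMap (Matrix.toEuclideanLin A)).le_opNorm x
  simpa [sNorm] using this

lemma sNorm_le {a b : ℕ} {A : Matrix (Fin a) (Fin b) ℝ} {C : ℝ} (hC : 0 ≤ C)
    (h : ∀ x : EuclideanSpace ℝ (Fin b), ‖Matrix.toEuclideanLin A x‖ ≤ C * ‖x‖) : sNorm A ≤ C :=
  ContinuousLinearMap.opNorm_le_bound _ hC (by simpa using h)

lemma el_mul {a b c : ℕ} (A : Matrix (Fin a) (Fin b) ℝ) (B : Matrix (Fin b) (Fin c) ℝ)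
    (x : EuclideanSpace ℝ (Fin c)) :
    Matrix.toEuclideanLin (A*B) x = Matrix.toEuclideanLin A (Matrix.toEuclideanLin B x) := by
  simp [Matrix.toEuclideanLin_apply, Matrix.mulVec_mulVec]

lemma el_one {a : ℕ} (x : EuclideanSpace ℝ (Fin a)) :
    Matrix.toEuclideanLin (1 : Matrix (Fin a) (Fin a) ℝ) x = x := by
  simp [Matrix.toEuclideanLin_apply]

lemma el_inner {a b : ℕ} (A : Matrix (Fin a) (Fin b) ℝ) (x : EuclideanSpace ℝ (Fin b))
    (y : EuclideanSpace ℝ (Fin a)) :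
    inner ℝ (Matrix.toEuclideanLin A x) y = (inner ℝ x (Matrix.toEuclideanLin Aᵀ y) : ℝ) := by
  simp only [Matrix.toEuclideanLin_apply, PiLp.inner_apply, RCLike.inner_apply, starRingEnd_apply]
  simp [Matrix.mulVec, dotProduct, Finset.sum_mul, Finset.mul_sum]
  rw [Finset.sum_comm]
  apply Finset.sum_congr rfl; intro i _; apply Finset.sum_congr rfl; intro j _; ring


lemma el_isometry {a b : ℕ} {V : Matrix (Fin a) (Fin b) ℝ} (hV : Vᵀ*V = 1)
    (x : EuclideanSpace ℝ (Fin b)) : ‖Matrix.toEuclideanLin V x‖ = ‖x‖ := by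
  have h : ‖Matrix.toEuclideanLin V x‖^2 = ‖x‖^2 := by
    rw [← real_inner_self_eq_norm_sq, ← real_inner_self_eq_norm_sq, el_inner, ← el_mul, hV, el_one]
  nlinarith [norm_nonneg (Matrix.toEuclideanLin V x), norm_nonneg x]

lemma el_proj {a b : ℕ} {V : Matrix (Fin a) (Fin b) ℝ} (hV : Vᵀ*V = 1)
    (y : EuclideanSpace ℝ (Fin a)) :
    ‖Matrix.toEuclideanLin (1 - V*Vᵀ) y‖^2 = ‖y‖^2 - ‖Matrix.toEuclideanLin Vᵀ y‖^2 := by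
  have h1 : Matrix.toEuclideanLin (1 - V*Vᵀ) y = y - Matrix.toEuclideanLin (V*Vᵀ) y := by
    rw [map_sub]; simp [el_one]
  have h2 : Matrix.toEuclideanLin (V*Vᵀ) y = Matrix.toEuclideanLin V (Matrix.toEuclideanLin Vᵀ y) :=
    el_mul _ _ _
  have h3 : (inner ℝ y (Matrix.toEuclideanLin (V*Vᵀ) y) : ℝ) = ‖Matrix.toEuclideanLin Vᵀ y‖^2 := by
    rw [h2, real_inner_comm, el_inner, real_inner_self_eq_norm_sq]
  have h4 : ‖Matrix.toEuclideanLin (V*Vᵀ) y‖ = ‖Matrix.toEuclideanLin Vᵀ y‖ := by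
    rw [h2, el_isometry hV]
  rw [h1, norm_sub_sq_real, h4, h3]; ring


noncomputable def S {a b : ℕ} (A : Matrix (Fin a) (Fin b) ℝ) : ℝ := ∑ i, ∑ j, (A i j) ^ 2

lemma S_nonneg {a b : ℕ} (A : Matrix (Fin a) (Fin b) ℝ) : 0 ≤ S A := by
  apply Finset.sum_nonneg; intro i _; apply Finset.sum_nonneg; intro j _; positivity

lemma frob_eq {a b : ℕ} (A : Matrix (Fin a) (Fin b) ℝ) : frob A = Real.sqrt (S A) := rfl

lemma frob_nonneg {a b : ℕ} (A : Matrix (Fin a) (Fin b) ℝ) : 0 ≤ frob A := Real.sqrt_nonneg _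

lemma S_eq_trace {a b : ℕ} (A : Matrix (Fin a) (Fin b) ℝ) : S A = Matrix.trace (Aᵀ * A) := by
  unfold S
  rw [Matrix.trace, Finset.sum_comm]
  apply Finset.sum_congr rfl; intro j _
  simp [Matrix.diag, Matrix.mul_apply, pow_two]

-- Euclidean norm squared of a vector
lemma enorm_sq {a : ℕ} (v : EuclideanSpace ℝ (Fin a)) : ‖v‖^2 = ∑ i, (v i)^2 := by
  rw [EuclideanSpace.norm_eq, Real.sq_sqrt (by positivity)]
  simp [Real.norm_eq_abs, sq_abs]

lemma frob_mul_le {a b c : ℕ} (X : Matrix (Fin a) (Fin b) ℝ) (B : Matrix (Fin b) (Fin c) ℝ) :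
    frob (X * B) ≤ frob X * sNorm Bᵀ := by
  have key : S (X * B) ≤ S X * (sNorm Bᵀ)^2 := by
    have hrow : ∀ i, ∑ j, ((X*B) i j)^2 ≤ (sNorm Bᵀ)^2 * ∑ k, (X i k)^2 := by
      intro i
      set x : EuclideanSpace ℝ (Fin b) := (WithLp.equiv 2 (Fin b → ℝ)).symm (fun k => X i k) with hx
      have h1 : ∑ j, ((X*B) i j)^2 = ‖Matrix.toEuclideanLin Bᵀ x‖^2 := by
        rw [enorm_sq]
        apply Finset.sum_congr rfl; intro j _
        congr 1
        simp [Matrix.toEuclideanLin_apply, Matrix.mulVec, Matrix.mul_apply, dotProduct, hx,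
          mul_comm]
      have h2 : ‖x‖^2 = ∑ k, (X i k)^2 := by
        rw [enorm_sq]; rfl
      rw [h1, ← h2]
      have := el_apply_le Bᵀ x
      nlinarith [norm_nonneg (Matrix.toEuclideanLin Bᵀ x), norm_nonneg x, sNorm_nonneg Bᵀ]
    calc S (X*B) = ∑ i, ∑ j, ((X*B) i j)^2 := rfl
      _ ≤ ∑ i, (sNorm Bᵀ)^2 * ∑ k, (X i k)^2 := Finset.sum_le_sum (fun i _ => hrow i)
      _ = S X * (sNorm Bᵀ)^2 := by rw [← Finset.mul_sum]; unfold S; ring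
  rw [frob_eq, frob_eq]
  calc Real.sqrt (S (X*B)) ≤ Real.sqrt (S X * (sNorm Bᵀ)^2) := Real.sqrt_le_sqrt key
    _ = Real.sqrt (S X) * sNorm Bᵀ := by
        rw [Real.sqrt_mul (S_nonneg X), Real.sqrt_sq (sNorm_nonneg Bᵀ)]


lemma transpose_lower {r : ℕ} (A : Matrix (Fin r) (Fin r) ℝ) {c : ℝ} (hc : 0 < c)
    (h : ∀ z : EuclideanSpace ℝ (Fin r), c * ‖z‖ ≤ ‖Matrix.toEuclideanLin A z‖) :
    ∀ x : EuclideanSpace ℝ (Fin r), c * ‖x‖ ≤ ‖Matrix.toEuclideanLin Aᵀ x‖ := by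
  have hinj : Function.Injective (Matrix.toEuclideanLin A) := by
    rw [← LinearMap.ker_eq_bot, LinearMap.ker_eq_bot']
    intro z hz
    have := h z
    rw [hz, norm_zero] at this
    have : ‖z‖ ≤ 0 := by nlinarith [norm_nonneg z]
    simpa using le_antisymm this (norm_nonneg z)
  have hsurj : Function.Surjective (Matrix.toEuclideanLin A) :=
    (LinearMap.injective_iff_surjective).1 hinj
  intro x
  rcases hsurj x with ⟨z, hz⟩
  have hzx : c * ‖z‖ ≤ ‖x‖ := by rw [← hz]; exact h z
  have hxx : ‖x‖^2 = inner ℝ z (Matrix.toEuclideanLin Aᵀ x) := by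
    rw [← real_inner_self_eq_norm_sq, ← hz, el_inner]
  have hcs : (inner ℝ z (Matrix.toEuclideanLin Aᵀ x) : ℝ) ≤ ‖z‖ * ‖Matrix.toEuclideanLin Aᵀ x‖ :=
    real_inner_le_norm _ _
  by_cases hx0 : ‖x‖ = 0
  · rw [hx0, mul_zero]; exact norm_nonneg _
  · have hxpos : 0 < ‖x‖ := lt_of_le_of_ne (norm_nonneg x) (Ne.symm hx0)
    have hz2 : ‖z‖ ≤ ‖x‖ / c := by rw [le_div_iff₀ hc]; linarith [hzx]
    nlinarith [norm_nonneg (Matrix.toEuclideanLin Aᵀ x), norm_nonneg z,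
      hxx ▸ hcs, mul_le_mul_of_nonneg_right hz2 (norm_nonneg (Matrix.toEuclideanLin Aᵀ x))]

lemma key_bound {m r : ℕ} {Vstar V : Matrix (Fin m) (Fin r) ℝ}
    (hVs : Vstarᵀ * Vstar = 1) (hV : Vᵀ * V = 1)
    {η : ℝ} (hη0 : 0 ≤ η) (hη1 : η ≤ 1)
    (hdist : sNorm ((1 - Vstar * Vstarᵀ) * V) ≤ η) :
    sNorm ((1 - V * Vᵀ) * Vstar) ≤ Real.sqrt 2 * η := by
  have h2 : (0:ℝ) ≤ Real.sqrt 2 * η := by positivity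
  by_cases hcase : 1 ≤ Real.sqrt 2 * η
  · -- trivial bound by 1
    apply sNorm_le h2
    intro x
    have e := el_mul (1 - V*Vᵀ) Vstar x
    have hp := el_proj hV (Matrix.toEuclideanLin Vstar x)
    have hi := el_isometry hVs x
    have : ‖Matrix.toEuclideanLin ((1 - V*Vᵀ) * Vstar) x‖ ≤ ‖x‖ := by
      rw [e]
      nlinarith [norm_nonneg (Matrix.toEuclideanLin (1 - V*Vᵀ) (Matrix.toEuclideanLin Vstar x)),
        norm_nonneg (Matrix.toEuclideanLin Vᵀ (Matrix.toEuclideanLin Vstar x)), norm_nonneg x]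
    calc ‖Matrix.toEuclideanLin ((1 - V*Vᵀ) * Vstar) x‖ ≤ ‖x‖ := this
      _ ≤ (Real.sqrt 2 * η) * ‖x‖ := by nlinarith [norm_nonneg x]
  · push_neg at hcase
    have hs2 : Real.sqrt 2 ^ 2 = 2 := Real.sq_sqrt (by norm_num)
    have hs2n : (1:ℝ) ≤ Real.sqrt 2 := by nlinarith [Real.sqrt_nonneg 2]
    have hη2 : η^2 < 1 := by nlinarith [Real.sqrt_nonneg 2]
    set c : ℝ := Real.sqrt (1 - η^2) with hc
    have hc2 : c^2 = 1 - η^2 := Real.sq_sqrt (by nlinarith)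
    have hcpos : 0 < c := Real.sqrt_pos.2 (by nlinarith)
    -- lower bound for Vstarᵀ * V
    have hlow : ∀ z : EuclideanSpace ℝ (Fin r),
        c * ‖z‖ ≤ ‖Matrix.toEuclideanLin (Vstarᵀ * V) z‖ := by
      intro z
      set y := Matrix.toEuclideanLin V z with hy
      have hyz : ‖y‖ = ‖z‖ := el_isometry hV z
      have hproj := el_proj hVs y
      have hsmall : ‖Matrix.toEuclideanLin (1 - Vstar*Vstarᵀ) y‖ ≤ η * ‖z‖ := by
        rw [hy, ← el_mul]
        calc ‖Matrix.toEuclideanLin ((1 - Vstar*Vstarᵀ) * V) z‖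
            ≤ sNorm ((1 - Vstar*Vstarᵀ) * V) * ‖z‖ := el_apply_le _ _
          _ ≤ η * ‖z‖ := by
              apply mul_le_mul_of_nonneg_right hdist (norm_nonneg z)
      have heq : ‖Matrix.toEuclideanLin (Vstarᵀ * V) z‖ = ‖Matrix.toEuclideanLin Vstarᵀ y‖ := by
        rw [hy, ← el_mul]
      rw [heq]
      nlinarith [norm_nonneg (Matrix.toEuclideanLin Vstarᵀ y), norm_nonneg z,
        norm_nonneg (Matrix.toEuclideanLin (1 - Vstar*Vstarᵀ) y), hyz ▸ hproj]
    have hlowT : ∀ x : EuclideanSpace ℝ (Fin r),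
        c * ‖x‖ ≤ ‖Matrix.toEuclideanLin (Vᵀ * Vstar) x‖ := by
      have := transpose_lower (Vstarᵀ * V) hcpos hlow
      intro x
      have h' := this x
      rwa [Matrix.transpose_mul, Matrix.transpose_transpose] at h'
    apply sNorm_le h2
    intro x
    have e := el_mul (1 - V*Vᵀ) Vstar x
    have hp := el_proj hV (Matrix.toEuclideanLin Vstar x)
    have hi := el_isometry hVs x
    have hVtV : ‖Matrix.toEuclideanLin Vᵀ (Matrix.toEuclideanLin Vstar x)‖
        = ‖Matrix.toEuclideanLin (Vᵀ * Vstar) x‖ := by rw [← el_mul]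
    have hl := hlowT x
    rw [e]
    set L := ‖Matrix.toEuclideanLin (1 - V*Vᵀ) (Matrix.toEuclideanLin Vstar x)‖ with hL
    set R := ‖Matrix.toEuclideanLin (Vᵀ * Vstar) x‖ with hR
    set X := ‖x‖ with hX
    have hLnn : 0 ≤ L := norm_nonneg _
    have hXnn : 0 ≤ X := norm_nonneg x
    have hRnn : 0 ≤ R := norm_nonneg _
    have hp2 : L^2 = X^2 - R^2 := by rw [hp, hi, hVtV]
    clear_value L R X
    clear_value c
    have hlsq : (c * X)^2 ≤ R^2 := by nlinarith [hl, mul_nonneg hcpos.le hXnn]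
    have hc2X : c^2 * X^2 = (1-η^2) * X^2 := by rw [hc2]
    clear hlow hlowT e hp hi hVtV hl hL hR hX hc hdist
    have h5 : L^2 ≤ (η*X)^2 := by nlinarith [hlsq, hc2X, hp2]
    have hbound : L ≤ η * X := by
      have h6 := Real.sqrt_le_sqrt h5
      rwa [Real.sqrt_sq hLnn, Real.sqrt_sq (by positivity)] at h6
    calc L ≤ η * X := hbound
      _ ≤ Real.sqrt 2 * η * X := by
          rw [mul_assoc]
          exact le_mul_of_one_le_left (mul_nonneg hη0 hXnn) hs2n


lemma Vt_proj_zero {a b : ℕ} {V : Matrix (Fin a) (Fin b) ℝ} (hV : Vᵀ*V = 1) :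
    Vᵀ * (1 - V*Vᵀ) = 0 := by
  rw [Matrix.mul_sub, Matrix.mul_one, ← Matrix.mul_assoc, hV, Matrix.one_mul, sub_self]

lemma proj_symm {a b : ℕ} (V : Matrix (Fin a) (Fin b) ℝ) :
    (1 - V*Vᵀ)ᵀ = 1 - V*Vᵀ := by
  rw [Matrix.transpose_sub, Matrix.transpose_one, Matrix.transpose_mul, Matrix.transpose_transpose]

lemma S_decomp {n m r : ℕ} (M : Matrix (Fin n) (Fin m) ℝ) {V : Matrix (Fin m) (Fin r) ℝ}
    (hV : Vᵀ*V = 1) (B : Matrix (Fin n) (Fin r) ℝ) :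
    S (M - B*Vᵀ) = S (M*(1 - V*Vᵀ)) + S ((M*V - B)*Vᵀ) := by
  set E := M*(1 - V*Vᵀ) with hE
  set D := (M*V - B)*Vᵀ with hD
  have hsum : M - B*Vᵀ = E + D := by
    rw [hE, hD, Matrix.mul_sub, Matrix.mul_one, Matrix.sub_mul, ← Matrix.mul_assoc,
      sub_add_sub_cancel]
  have hcross : Matrix.trace (Eᵀ * D) = 0 := by
    have h1 : Eᵀ * D = ((1 - V*Vᵀ) * (Mᵀ * (M*V - B))) * Vᵀ := by
      rw [hE, hD, Matrix.transpose_mul, proj_symm]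
      simp only [Matrix.mul_assoc]
    rw [h1, Matrix.trace_mul_comm, ← Matrix.mul_assoc, Vt_proj_zero hV, Matrix.zero_mul,
      Matrix.trace_zero]
  have hcross' : Matrix.trace (Dᵀ * E) = 0 := by
    have : Dᵀ * E = (Eᵀ * D)ᵀ := by
      simp [Matrix.transpose_mul, Matrix.transpose_transpose, Matrix.mul_assoc]
    rw [this, Matrix.trace_transpose, hcross]
  rw [hsum, S_eq_trace, S_eq_trace, S_eq_trace, Matrix.transpose_add, Matrix.add_mul,
    Matrix.mul_add, Matrix.mul_add, Matrix.trace_add, Matrix.trace_add, Matrix.trace_add,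
    hcross, hcross']
  ring

lemma frob_M_eq {n m r : ℕ} {W : Matrix (Fin n) (Fin r) ℝ} {Vs : Matrix (Fin m) (Fin r) ℝ}
    (hVs : Vsᵀ * Vs = 1) : frob (W * Vsᵀ) = frob W := by
  rw [frob_eq, frob_eq]
  congr 1
  rw [S_eq_trace, S_eq_trace, Matrix.transpose_mul, Matrix.transpose_transpose]
  calc Matrix.trace (Vs * Wᵀ * (W * Vsᵀ)) = Matrix.trace (Vs * (Wᵀ * (W * Vsᵀ))) := by
        rw [Matrix.mul_assoc]
    _ = Matrix.trace ((Wᵀ * (W * Vsᵀ)) * Vs) := Matrix.trace_mul_comm _ _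
    _ = Matrix.trace (Wᵀ * W) := by
        rw [Matrix.mul_assoc, Matrix.mul_assoc, hVs, Matrix.mul_one]

theorem stmt18 {n m r : ℕ} (M : Matrix (Fin n) (Fin m) ℝ)
    (Ustar : Matrix (Fin n) (Fin r) ℝ) (Sd : Fin r → ℝ)
    (Vstar V : Matrix (Fin m) (Fin r) ℝ)
    (hU : Ustarᵀ * Ustar = 1) (hVs : Vstarᵀ * Vstar = 1) (hV : Vᵀ * V = 1)
    (hM : M = Ustar * Matrix.diagonal Sd * Vstarᵀ)
    (η : ℝ) (hη0 : 0 ≤ η) (hη1 : η ≤ 1)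
    (hdist : sNorm ((1 - Vstar * Vstarᵀ) * V) ≤ η)
    (Uhat : Matrix (Fin n) (Fin r) ℝ) (hUhat : Uhat = M * V) :
    (∀ B : Matrix (Fin n) (Fin r) ℝ, frob (M - Uhat * Vᵀ) ≤ frob (M - B * Vᵀ)) ∧
    frob (M - Uhat * Vᵀ) = frob (M * (1 - V * Vᵀ)) ∧
    frob (M * (1 - V * Vᵀ)) ≤ frob M * sNorm ((1 - V * Vᵀ) * Vstar) ∧
    frob (M * (1 - V * Vᵀ)) ≤ Real.sqrt 2 * η * frob M := by
  have hpart2 : M - Uhat * Vᵀ = M * (1 - V * Vᵀ) := by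
    rw [hUhat, Matrix.mul_sub, Matrix.mul_one, ← Matrix.mul_assoc]
  have hpart1 : ∀ B : Matrix (Fin n) (Fin r) ℝ,
      frob (M - Uhat * Vᵀ) ≤ frob (M - B * Vᵀ) := by
    intro B
    rw [hpart2, frob_eq, frob_eq, S_decomp M hV B]
    apply Real.sqrt_le_sqrt
    linarith [S_nonneg ((M*V - B)*Vᵀ)]
  have hpart3 : frob (M * (1 - V * Vᵀ)) ≤ frob M * sNorm ((1 - V * Vᵀ) * Vstar) := by
    set W := Ustar * Matrix.diagonal Sd with hW
    have hM2 : M * (1 - V * Vᵀ) = W * ((1 - V*Vᵀ) * Vstar)ᵀ := by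
      rw [Matrix.transpose_mul, proj_symm, hM, hW]
      simp only [Matrix.mul_assoc]
    have hfM : frob M = frob W := by rw [hM]; exact frob_M_eq hVs
    calc frob (M * (1 - V * Vᵀ)) = frob (W * ((1 - V*Vᵀ) * Vstar)ᵀ) := by rw [hM2]
      _ ≤ frob W * sNorm (((1 - V*Vᵀ) * Vstar)ᵀᵀ) := frob_mul_le _ _
      _ = frob M * sNorm ((1 - V*Vᵀ) * Vstar) := by
          rw [Matrix.transpose_transpose, hfM]
  refine ⟨hpart1, by rw [hpart2], hpart3, ?_⟩
  calc frob (M * (1 - V * Vᵀ)) ≤ frob M * sNorm ((1 - V * Vᵀ) * Vstar) := hpart3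
    _ ≤ frob M * (Real.sqrt 2 * η) := by
        apply mul_le_mul_of_nonneg_left (key_bound hVs hV hη0 hη1 hdist) (frob_nonneg M)
    _ = Real.sqrt 2 * η * frob M := by ring
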